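/- Let M be a q × N real matrix such that no row contains repeated elements. Then M contains a q × N' submatrix, obtained by selecting N' = ⌈N^{1/2^q}⌉ columns (keeping their order), in which every row is strictly monotone (each row either strictly increasing or strictly decreasing). -/

import Mathlib

open Function Finset

private theorem my_erdos_szekeres {α : Type*} [LinearOrder α] {r s n : ℕ} {f : Fin n → α}
    (hn : r * s < n) (hf : Injective f) :
    (∃ t : Finset (Fin n), r < #t ∧ StrictMonoOn f ↑t) ∨
      ∃ t : Finset (Fin n), s < #t ∧ StrictAntiOn f ↑t := by
  let inc_sequences_ending_in : Fin n → Finset (Finset (Fin n)) := fun i =>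
    univ.powerset.filter fun t => Finset.max t = i ∧ StrictMonoOn f ↑t
  let dec_sequences_ending_in : Fin n → Finset (Finset (Fin n)) := fun i =>
    univ.powerset.filter fun t => Finset.max t = i ∧ StrictAntiOn f ↑t
  have inc_i : ∀ i, {i} ∈ inc_sequences_ending_in i := fun i => by
    simp [inc_sequences_ending_in, StrictMonoOn]
  have dec_i : ∀ i, {i} ∈ dec_sequences_ending_in i := fun i => by
    simp [dec_sequences_ending_in, StrictAntiOn]
  let ab' : Fin n → ℕ × ℕ := by
    intro i
    apply
      (max' ((inc_sequences_ending_in i).image card) (Nonempty.image ⟨{i}, inc_i i⟩ _),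
        max' ((dec_sequences_ending_in i).image card) (Nonempty.image ⟨{i}, dec_i i⟩ _))
  generalize hab : ab' = ab
  rsuffices ⟨i, hi⟩ : ∃ i, r < (ab i).1 ∨ s < (ab i).2
  · refine Or.imp ?_ ?_ hi
    on_goal 1 =>
      have : (ab i).1 ∈ image card (inc_sequences_ending_in i) := by
        simp only [← hab]; exact max'_mem _ (Nonempty.image ⟨{i}, inc_i i⟩ _)
    on_goal 2 =>
      have : (ab i).2 ∈ image card (dec_sequences_ending_in i) := by
        simp only [← hab]; exact max'_mem _ (Nonempty.image ⟨{i}, dec_i i⟩ _)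
    all_goals
      intro hi
      rw [mem_image] at this
      obtain ⟨t, ht₁, ht₂⟩ := this
      refine ⟨t, by rwa [ht₂], ?_⟩
      rw [mem_filter] at ht₁
      apply ht₁.2.2
  have : Injective ab := by
    simp only [← hab]
    apply Injective.of_lt_imp_ne
    intro i j k q
    injection q with q₁ q₂
    cases lt_or_gt_of_ne fun _ => ne_of_lt ‹i < j› (hf ‹f i = f j›)
    on_goal 1 =>
      apply ne_of_lt _ q₁
      have : (ab' i).1 ∈ image card (inc_sequences_ending_in i) := by exact max'_mem _ (Nonempty.image ⟨{i}, inc_i i⟩ _)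
    on_goal 2 =>
      apply ne_of_lt _ q₂
      have : (ab' i).2 ∈ image card (dec_sequences_ending_in i) := by exact max'_mem _ (Nonempty.image ⟨{i}, dec_i i⟩ _)
    all_goals
      rw [Nat.lt_iff_add_one_le]
      apply le_max'
      rw [mem_image] at this ⊢
      rcases this with ⟨t, ht₁, ht₂⟩
      rw [mem_filter] at ht₁
      have : t.max = i := by simp only [ht₁.2.1]
      refine ⟨insert j t, ?_, ?_⟩
      · rw [mem_filter]
        refine ⟨?_, ?_, ?_⟩
        · rw [mem_powerset]; apply subset_univ
        · convert max_insert (a := j) (s := t)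
          rw [ht₁.2.1, max_eq_left]
          apply WithBot.coe_le_coe.mpr (le_of_lt ‹i < j›)
        simp only [StrictMonoOn, StrictAntiOn, coe_insert, Set.mem_insert_iff, mem_coe]
        rintro x ⟨rfl | _⟩ y ⟨rfl | _⟩ _
        · apply (irrefl _ ‹j < j›).elim
        · exfalso
          apply not_le_of_gt (_root_.trans ‹i < j› ‹j < y›) (le_max_of_eq ‹y ∈ t› ‹t.max = i›)
        · first
          | apply lt_of_le_of_lt _ ‹f i < f j›
          | apply lt_of_lt_of_le ‹f j < f i› _
          rcases lt_or_eq_of_le (le_max_of_eq ‹x ∈ t› ‹t.max = i›) with (_ | rfl)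
          · apply le_of_lt (ht₁.2.2 ‹x ∈ t› (mem_of_max ‹t.max = i›) ‹x < i›)
          · rfl
        · apply ht₁.2.2 ‹x ∈ t› ‹y ∈ t› ‹x < y›
      · rw [card_insert_of_notMem, ht₂]
        intro
        apply not_le_of_gt ‹i < j› (le_max_of_eq ‹j ∈ t› ‹t.max = i›)
  by_contra! q
  let ran : Finset (ℕ × ℕ) := (range r).image Nat.succ ×ˢ (range s).image Nat.succ
  have : image ab univ ⊆ ran := by
    rintro ⟨x₁, x₂⟩
    simp only [ran, mem_image, exists_prop, mem_range, mem_univ, mem_product, true_and,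
      Prod.ext_iff]
    rintro ⟨i, rfl, rfl⟩
    specialize q i
    have z : 1 ≤ (ab i).1 ∧ 1 ≤ (ab i).2 := by
      simp only [← hab]
      constructor <;>
        · apply le_max'
          rw [mem_image]
          exact ⟨{i}, by solve_by_elim, card_singleton i⟩
    exact ⟨⟨(ab i).1 - 1, by omega⟩, (ab i).2 - 1, by omega⟩
  apply not_le_of_gt hn
  simpa [ran, Nat.succ_injective, card_image_of_injective, ‹Injective ab›] using card_le_card this

/-- Subsequence form: from `(k-1)^2 < n`, extract a monotone subsequence of length `k`. -/
theorem es_subseq {n k : ℕ} {f : Fin n → ℝ} (hf : Injective f)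
    (hk : (k - 1) * (k - 1) < n) :
    ∃ g : Fin k → Fin n, StrictMono g ∧
      (StrictMono (fun j => f (g j)) ∨ StrictAnti (fun j => f (g j))) := by
  rcases my_erdos_szekeres (r := k - 1) (s := k - 1) hk hf with ⟨t, ht, hm⟩ | ⟨t, ht, hm⟩
  · rcases Nat.eq_zero_or_pos k with rfl | hk0
    · exact ⟨Fin.elim0, fun a => a.elim0, Or.inl fun a => a.elim0⟩
    have hle : k ≤ t.card := by omega
    refine ⟨t.orderEmbOfCardLe hle, (t.orderEmbOfCardLe hle).strictMono, Or.inl ?_⟩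
    intro a b hab
    exact hm (t.orderEmbOfCardLe_mem hle a) (t.orderEmbOfCardLe_mem hle b)
      ((t.orderEmbOfCardLe hle).strictMono hab)
  · rcases Nat.eq_zero_or_pos k with rfl | hk0
    · exact ⟨Fin.elim0, fun a => a.elim0, Or.inl fun a => a.elim0⟩
    have hle : k ≤ t.card := by omega
    refine ⟨t.orderEmbOfCardLe hle, (t.orderEmbOfCardLe hle).strictMono, Or.inr ?_⟩
    intro a b hab
    exact hm (t.orderEmbOfCardLe_mem hle a) (t.orderEmbOfCardLe_mem hle b)
      ((t.orderEmbOfCardLe hle).strictMono hab)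

theorem main_aux (q : ℕ) : ∀ (N : ℕ) (M : Fin q → Fin N → ℝ),
    (∀ i, Function.Injective (M i)) →
    ∃ g : Fin (⌈(N : ℝ) ^ ((1 : ℝ) / 2 ^ q)⌉₊) → Fin N, StrictMono g ∧
      ∀ i, StrictMono (fun j => M i (g j)) ∨ StrictAnti (fun j => M i (g j)) := by
  induction q with
  | zero =>
    intro N M _
    have hN : ⌈(N : ℝ) ^ ((1 : ℝ) / 2 ^ 0)⌉₊ = N := by norm_num
    refine ⟨fun j => Fin.cast hN j, fun a b hab => by simpa using hab, fun i => i.elim0⟩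
  | succ q ih =>
    intro N M hM
    set n₁ := ⌈(N : ℝ) ^ ((1 : ℝ) / 2 ^ q)⌉₊ with hn₁
    set m := ⌈(N : ℝ) ^ ((1 : ℝ) / 2 ^ (q + 1))⌉₊ with hm
    obtain ⟨g₁, hg₁, hrows⟩ := ih N (fun i => M i.succ) (fun i => hM i.succ)
    rcases Nat.eq_zero_or_pos m with h0 | h0
    · exact ⟨fun j => Fin.elim0 (Fin.cast h0 j),
        fun a b hab => Fin.elim0 (Fin.cast h0 a),
        fun i => Or.inl fun a b hab => Fin.elim0 (Fin.cast h0 a)⟩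
    have hf : Injective (fun j => M 0 (g₁ j)) := (hM 0).comp hg₁.injective
    have hlt : (m - 1) * (m - 1) < n₁ := by
      have h1 : ((m : ℝ) - 1) < (N : ℝ) ^ ((1 : ℝ) / 2 ^ (q + 1)) := by
        have := Nat.ceil_lt_add_one (by positivity : (0:ℝ) ≤ (N : ℝ) ^ ((1 : ℝ) / 2 ^ (q + 1)))
        rw [← hm] at this; linarith
      have h2 : ((m : ℝ) - 1) ^ 2 < ((N : ℝ) ^ ((1 : ℝ) / 2 ^ (q + 1))) ^ 2 := by
        have hnn : (0:ℝ) ≤ (m:ℝ) - 1 := by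
          have : (1:ℝ) ≤ (m:ℝ) := by exact_mod_cast h0
          linarith
        exact pow_lt_pow_left₀ h1 hnn (by norm_num)
      have h3 : ((N : ℝ) ^ ((1 : ℝ) / 2 ^ (q + 1))) ^ 2 = (N : ℝ) ^ ((1 : ℝ) / 2 ^ q) := by
        rw [← Real.rpow_natCast ((N : ℝ) ^ ((1 : ℝ) / 2 ^ (q + 1))) 2,
          ← Real.rpow_mul (by positivity)]
        norm_num
        ring_nf
      have h4 : ((m : ℝ) - 1) ^ 2 < (n₁ : ℝ) := by
        calc ((m : ℝ) - 1) ^ 2 < (N : ℝ) ^ ((1 : ℝ) / 2 ^ q) := by rw [← h3]; exact h2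
        _ ≤ n₁ := Nat.le_ceil _
      have h5 : ((m - 1 : ℕ) : ℝ) = (m : ℝ) - 1 := by
        have : (1:ℕ) ≤ m := h0
        push_cast [this]; ring
      have : (((m - 1) * (m - 1) : ℕ) : ℝ) < (n₁ : ℝ) := by
        push_cast [h5]; nlinarith [h4]
      exact_mod_cast this
    obtain ⟨g₂, hg₂, hrow0⟩ := es_subseq hf hlt
    refine ⟨fun j => g₁ (g₂ j), fun a b hab => hg₁ (hg₂ hab), ?_⟩
    intro i
    refine Fin.cases ?_ ?_ i
    · exact hrow0
    · intro i'
      rcases hrows i' with h | h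
      · exact Or.inl fun a b hab => h (hg₂ hab)
      · exact Or.inr fun a b hab => h (hg₂ hab)


/-- Every `q × N` real matrix whose rows have no repeated elements contains a
row-monotone `q × ⌈N^(1/2^q)⌉` submatrix (obtained by selecting columns in order). -/
theorem rowMonotone_submatrix {q N : ℕ} (M : Fin q → Fin N → ℝ)
    (hM : ∀ i, Function.Injective (M i)) :
    ∃ g : Fin (⌈(N : ℝ) ^ ((1 : ℝ) / 2 ^ q)⌉₊) → Fin N, StrictMono g ∧
      ∀ i, StrictMono (fun j => M i (g j)) ∨ StrictAnti (fun j => M i (g j)) :=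
  main_aux q N M hM
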